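/- Let F be a finite field of odd characteristic with quadratic character λ, and let χ be a multiplicative character on F with χ⁴ ≠ 𝟙. Then B(F, χ) := ∑_{x ∈ F} ∑_{z ∈ F^×} χ(z) · λ(x³ + x²z - 4xz) equals χ²(4) · j_F(χ, χ) · j_F(λχ², χ⁻¹). -/

import Mathlib

open Finset
open scoped Classical

/-- Jacobi sum with the sign convention of the paper:
`j_F(χ₁, χ₂) = -∑_{x₁+x₂=1} χ₁(x₁)χ₂(x₂)`. -/
noncomputable def jac {F : Type*} [Field F] [Fintype F]
    (χ₁ χ₂ : MulChar F ℂ) : ℂ :=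
  -∑ x : F, χ₁ x * χ₂ (1 - x)

/-- The double character sum `B(F, χ) = ∑_{x ∈ F} ∑_{z ∈ F^×} χ(z) λ(x³ + x²z - 4xz)`. -/

noncomputable def Bsum (F : Type*) [Field F] [Fintype F]
    (χ lam : F → ℂ) : ℂ :=
  ∑ x : F, ∑ z ∈ Finset.univ.filter (fun z : F => z ≠ 0),
    χ z * lam (x ^ 3 + x ^ 2 * z - 4 * x * z)


private lemma lam_eq_quadChar {F : Type*} [Field F] [Fintype F] [DecidableEq F]
    (lam : MulChar F ℂ) (hl2 : lam ^ 2 = 1) (hl1 : lam ≠ 1) (a : F) :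
    lam a = ((quadraticChar F a : ℤ) : ℂ) := by
  have hone : ∀ {y : F}, y ≠ 0 → (1 : MulChar F ℂ) y = 1 := by
    intro y hy
    have hu := isUnit_iff_ne_zero.mpr hy
    rw [← hu.unit_spec, MulChar.one_apply_coe]
  have hsq : ∀ {y : F}, y ≠ 0 → IsSquare y → lam y = 1 := by
    rintro y hy ⟨b, rfl⟩
    have hb : b ≠ 0 := by rintro rfl; simp at hy
    rw [map_mul, ← MulChar.mul_apply, ← pow_two, hl2, hone hb]
  by_cases ha : a = 0
  · subst ha
    rw [lam.map_nonunit (by simp), MulChar.map_zero]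
    norm_num
  by_cases hs : IsSquare a
  · rw [(quadraticChar_one_iff_isSquare ha).mpr hs, hsq ha hs]; norm_num
  · rw [quadraticChar_neg_one_iff_not_isSquare.mpr hs]
    have h1 : lam a * lam a = 1 := by
      rw [← MulChar.mul_apply, ← pow_two, hl2, hone ha]
    rcases mul_self_eq_one_iff.mp h1 with h' | h'
    · exfalso
      apply hl1
      apply MulChar.ext
      intro x
      rw [MulChar.one_apply_coe]
      by_cases hx : IsSquare (x : F)
      · exact hsq x.ne_zero hx
      · have hqa : quadraticChar F a = -1 := quadraticChar_neg_one_iff_not_isSquare.mpr hs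
        have hqx : quadraticChar F (x : F) = -1 :=
          quadraticChar_neg_one_iff_not_isSquare.mpr hx
        have hainv : a⁻¹ ≠ 0 := inv_ne_zero ha
        have hqai : quadraticChar F a⁻¹ = -1 := by
          have : quadraticChar F a * quadraticChar F a⁻¹ = 1 := by
            rw [← map_mul, mul_inv_cancel₀ ha, map_one]
          rw [hqa] at this; omega
        have hmul : quadraticChar F ((x : F) * a⁻¹) = 1 := by
          rw [map_mul, hqx, hqai]; ring
        have hxane : (x : F) * a⁻¹ ≠ 0 := mul_ne_zero x.ne_zero hainv
        have hsq2 : IsSquare ((x : F) * a⁻¹) :=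
          (quadraticChar_one_iff_isSquare hxane).mp hmul
        have : (x : F) = ((x : F) * a⁻¹) * a := by field_simp
        rw [this, map_mul, hsq hxane hsq2, h', mul_one]
    · rw [h']; norm_num

private lemma sum_sq_expand {F : Type*} [Field F] [Fintype F] [DecidableEq F]
    (hchar : ringChar F ≠ 2)
    (lam : MulChar F ℂ) (hl2 : lam ^ 2 = 1) (hl1 : lam ≠ 1) (g : F → ℂ) :
    ∑ s : F, g (s ^ 2) = ∑ u : F, (1 + lam u) * g u := by
  rw [← Finset.sum_fiberwise' univ (fun s : F => s ^ 2) g]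
  refine Finset.sum_congr rfl fun u _ => ?_
  rw [Finset.sum_const, nsmul_eq_mul]
  congr 1
  have hq := quadraticChar_card_sqrts hchar u
  have hcard : ({x : F | x ^ 2 = u}.toFinset).card
      = (univ.filter (fun s : F => s ^ 2 = u)).card := by
    congr 1; ext x; simp
  rw [hcard] at hq
  have := congrArg (Int.cast : ℤ → ℂ) hq
  push_cast at this
  rw [this, lam_eq_quadChar lam hl2 hl1 u]
  ring

theorem Bsum_generic {F : Type*} [Field F] [Fintype F]
    (hchar : ringChar F ≠ 2)
    (lam : MulChar F ℂ) (hl2 : lam ^ 2 = 1) (hl1 : lam ≠ 1)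
    (χ : MulChar F ℂ) (hχ : χ ^ 4 ≠ 1) :
    Bsum F ⇑χ ⇑lam = (χ ^ 2) 4 * jac χ χ * jac (lam * χ ^ 2) χ⁻¹ := by
  classical
  have hχ1 : χ ≠ 1 := by rintro rfl; simp at hχ
  have htwo : (2 : F) ≠ 0 := Ring.two_ne_zero hchar
  have hfour : (4 : F) ≠ 0 := by
    have h : (4 : F) = 2 * 2 := by norm_num
    rw [h]; exact mul_ne_zero htwo htwo
  have hχ0 : χ (0 : F) = 0 := χ.map_nonunit (by simp)
  have hlam0 : lam (0 : F) = 0 := lam.map_nonunit (by simp)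
  have hone : ∀ {y : F}, y ≠ 0 → (1 : MulChar F ℂ) y = 1 := by
    intro y hy
    have hu := isUnit_iff_ne_zero.mpr hy
    rw [← hu.unit_spec, MulChar.one_apply_coe]
  have hlamsq : ∀ {y : F}, y ≠ 0 → lam (y ^ 2) = 1 := by
    intro y hy
    rw [map_pow, ← MulChar.pow_apply' lam (by norm_num : (2:ℕ) ≠ 0), hl2, hone hy]
  have hlam4 : lam (4 : F) = 1 := by
    have h : (4 : F) = 2 ^ 2 := by norm_num
    rw [h, hlamsq htwo]
  have hχinv : ∀ {y : F}, y ≠ 0 → χ y⁻¹ = (χ y)⁻¹ := by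
    intro y hy
    refine eq_inv_of_mul_eq_one_left ?_
    rw [← map_mul, inv_mul_cancel₀ hy, map_one]
  have hχ4ne : χ (4 : F) ≠ 0 := by
    have h : χ (4 : F) * χ (4 : F)⁻¹ = 1 := by
      rw [← map_mul, mul_inv_cancel₀ hfour, map_one]
    exact left_ne_zero_of_mul_eq_one h
  -- Step A
  have stepA : Bsum F ⇑χ ⇑lam
      = (∑ x : F, lam x * (χ (x ^ 2) * χ ((4 - x)⁻¹))) * (-jac χ lam) := by
    rw [Finset.sum_mul]
    unfold Bsum
    refine Finset.sum_congr rfl fun x _ => ?_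
    rw [Finset.sum_filter_of_ne (by
      intro z _ hne hz; subst hz; rw [hχ0, zero_mul] at hne; exact hne rfl)]
    by_cases hx0 : x = 0
    · subst hx0; simp [hlam0]
    by_cases hx4 : x = 4
    · subst hx4
      have harg : ∀ z : F, (4:F) ^ 3 + 4 ^ 2 * z - 4 * 4 * z = 64 := by intro z; ring
      simp_rw [harg]
      rw [← Finset.sum_mul, MulChar.sum_eq_zero_of_ne_one hχ1, zero_mul]
      have : ((4:F) - 4)⁻¹ = 0 := by norm_num
      rw [this, hχ0]
      ring
    · have hx4' : (4 : F) - x ≠ 0 := sub_ne_zero.mpr (Ne.symm hx4)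
      set c : F := x ^ 2 * (4 - x)⁻¹ with hc
      have hcne : c ≠ 0 := mul_ne_zero (pow_ne_zero 2 hx0) (inv_ne_zero hx4')
      have hre : ∑ z : F, χ z * lam (x ^ 3 + x ^ 2 * z - 4 * x * z)
          = ∑ t : F, χ (c * t) * lam (x ^ 3 + x ^ 2 * (c * t) - 4 * x * (c * t)) :=
        (Fintype.sum_bijective (fun t : F => c * t) (mulLeft_bijective₀ c hcne)
          _ _ (fun t => rfl)).symm
      rw [hre]
      have harg : ∀ t : F, x ^ 3 + x ^ 2 * (c * t) - 4 * x * (c * t) = x ^ 3 * (1 - t) := by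
        intro t; rw [hc]; field_simp; ring
      have hx3 : lam (x ^ 3) = lam x := by
        have h : x ^ 3 = x * x ^ 2 := by ring
        rw [h, map_mul, hlamsq hx0, mul_one]
      have hχc : χ c = χ (x ^ 2) * χ ((4 - x)⁻¹) := by rw [hc, map_mul]
      calc ∑ t : F, χ (c * t) * lam (x ^ 3 + x ^ 2 * (c * t) - 4 * x * (c * t))
          = ∑ t : F, (χ c * lam x) * (χ t * lam (1 - t)) := by
            refine Finset.sum_congr rfl fun t _ => ?_
            rw [harg t, map_mul χ c t, map_mul lam (x ^ 3) ((1:F) - t), hx3]; ring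
        _ = (χ c * lam x) * ∑ t : F, χ t * lam (1 - t) := by rw [← Finset.mul_sum]
        _ = lam x * (χ (x ^ 2) * χ ((4 - x)⁻¹)) * (-jac χ lam) := by
            rw [hχc]; unfold jac; rw [neg_neg]; ring
  -- Step B
  have stepB : (∑ x : F, lam x * (χ (x ^ 2) * χ ((4 - x)⁻¹)))
      = χ 4 * (-jac (lam * χ ^ 2) χ⁻¹) := by
    rw [← Fintype.sum_bijective (fun u : F => (4:F) * u) (mulLeft_bijective₀ 4 hfour)
      (fun u => lam ((4:F)*u) * (χ (((4:F)*u) ^ 2) * χ ((4 - (4:F)*u)⁻¹)))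
      (fun x => lam x * (χ (x ^ 2) * χ ((4 - x)⁻¹))) (fun u => rfl)]
    unfold jac
    rw [neg_neg, Finset.mul_sum]
    refine Finset.sum_congr rfl fun u _ => ?_
    by_cases hu0 : u = 0
    · subst hu0
      simp [hlam0, MulChar.mul_apply]
    by_cases hu1 : u = 1
    · subst hu1
      have h1 : ((4:F) - 4 * 1)⁻¹ = 0 := by norm_num
      have h2 : χ⁻¹ ((1:F) - 1) = 0 := by
        rw [MulChar.inv_apply', sub_self, inv_zero, hχ0]
      rw [h1, h2, hχ0]; ring
    · have h1u : (1 : F) - u ≠ 0 := sub_ne_zero.mpr (Ne.symm hu1)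
      have e1 : lam ((4:F) * u) = lam u := by rw [map_mul, hlam4, one_mul]
      have e2 : χ (((4:F) * u) ^ 2) = (χ 4) ^ 2 * χ (u ^ 2) := by
        rw [mul_pow, map_mul, map_pow]
      have e3 : χ (((4:F) - 4 * u)⁻¹) = (χ 4)⁻¹ * χ ((1 - u)⁻¹) := by
        have h : (4:F) - 4 * u = 4 * (1 - u) := by ring
        rw [h, mul_inv, map_mul, hχinv hfour]
      have e4 : (lam * χ ^ 2) u = lam u * χ (u ^ 2) := by
        rw [MulChar.mul_apply, MulChar.pow_apply' χ (by norm_num : (2:ℕ) ≠ 0), map_pow]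
      have e5 : χ⁻¹ ((1:F) - u) = χ ((1 - u)⁻¹) := by rw [MulChar.inv_apply']
      rw [e1, e2, e3, e4, e5]
      field_simp
  -- jac is symmetric
  have hsub_bij : Function.Bijective (fun y : F => (1:F) - y) := by
    refine Finite.injective_iff_bijective.mp ?_
    intro a b h
    have hab : (1:F) - a = 1 - b := h
    have h' : (1:F) - (1 - a) = 1 - (1 - b) := by rw [hab]
    simpa [sub_sub_cancel] using h'
  have hsymm : ∀ χ₁ χ₂ : MulChar F ℂ, jac χ₁ χ₂ = jac χ₂ χ₁ := by
    intro χ₁ χ₂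
    unfold jac
    congr 1
    refine Fintype.sum_bijective (fun y : F => (1:F) - y) hsub_bij _ _ fun y => ?_
    simp only [sub_sub_cancel]
    ring
  have sum_chi_shift : ∑ u : F, χ (1 - u) = 0 := by
    rw [Fintype.sum_bijective (fun y : F => (1:F) - y) hsub_bij
      (fun u => χ (1 - u)) (fun v => χ v) (fun y => by simp)]
    exact MulChar.sum_eq_zero_of_ne_one hχ1
  -- Step C : jac χ lam = χ 4 * jac χ χ
  have stepC : jac χ lam = χ 4 * jac χ χ := by
    have hhalf_bij : Function.Bijective (fun s : F => (1 + s) / 2) := by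
      refine Finite.injective_iff_bijective.mp ?_
      intro a b h
      field_simp at h
      exact add_left_cancel h
    have h1 : -jac χ χ = (χ 4)⁻¹ * ∑ s : F, χ (1 - s ^ 2) := by
      unfold jac
      rw [neg_neg, Finset.mul_sum]
      rw [← Fintype.sum_bijective (fun s : F => (1 + s) / 2) hhalf_bij
        (fun s => χ ((1 + s)/2) * χ (1 - (1 + s)/2)) (fun t => χ t * χ (1 - t))
        (fun s => rfl)]
      refine Finset.sum_congr rfl fun s _ => ?_
      rw [← map_mul]
      have h : ((1:F) + s)/2 * (1 - (1 + s)/2) = 4⁻¹ * (1 - s ^ 2) := by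
        field_simp; ring
      rw [h, map_mul, hχinv hfour]
    have h2 : ∑ s : F, χ (1 - s ^ 2) = ∑ u : F, (1 + lam u) * χ (1 - u) :=
      sum_sq_expand hchar lam hl2 hl1 (fun u => χ (1 - u))
    have h3 : ∑ u : F, (1 + lam u) * χ (1 - u) = -jac χ lam := by
      simp_rw [add_mul, one_mul]
      rw [Finset.sum_add_distrib, sum_chi_shift, zero_add, hsymm χ lam]
      unfold jac
      rw [neg_neg]
    have hkey : -jac χ χ = (χ 4)⁻¹ * (-jac χ lam) := by rw [h1, h2, h3]
    have h4 : χ 4 * (-jac χ χ) = -jac χ lam := by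
      rw [hkey, ← mul_assoc, mul_inv_cancel₀ hχ4ne, one_mul]
    linear_combination h4
  -- Assemble
  rw [stepA, stepB, stepC]
  have hp : (χ ^ 2) (4 : F) = χ 4 * χ 4 := by
    rw [MulChar.pow_apply' χ (by norm_num : (2:ℕ) ≠ 0)]; ring
  rw [hp]
  ring
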